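/- arXiv:2005.00856 — 8 statements merged into one kernel-verified Lean document; each statement's English description precedes it below -/
import Mathlib

section
/- Let k = 2 and m ≥ 1, and let h, r, t be segmented embeddings with segments h₀, h₁, r₀, r₁, t₀, t₁ ∈ ℝ^m. Form the complex vectors H, R, T ∈ ℂ^m by H_i = (h₀)_i + (h₁)_i·I, R_i = (r₀)_i + (r₁)_i·I, T_i = (t₀)_i + (t₁)_i·I. Then f₄(h, r, t) = Re(∑_{i<m} R_i · H_i · conj(T_i)), i.e., SEEK with k = 2 coincides with the ComplEx scoring function whose real and imaginary parts are the even and odd segments respectively. -/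
open Finset

/-- Multi-linear dot product of three vectors in ℝ^m. -/
def mdot {m : ℕ} (a b c : Fin m → ℝ) : ℝ := ∑ i : Fin m, a i * b i * c i

/-- Sign s_{x,y}: -1 if x is odd and x + y ≥ k, else 1. -/
def sSign {k : ℕ} (x y : Fin k) : ℝ :=
  if x.val % 2 = 1 ∧ k ≤ x.val + y.val then -1 else 1

/-- Tail index w_{x,y}: y if x even, (x+y) mod k if x odd. -/
def wIdx {k : ℕ} (x y : Fin k) : Fin k :=
  if x.val % 2 = 0 then y else ⟨(x.val + y.val) % k, Nat.mod_lt _ x.pos⟩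

/-- SEEK scoring function f₄. -/
def f4 {k m : ℕ} (h r t : Fin k → Fin m → ℝ) : ℝ :=
  ∑ x : Fin k, ∑ y : Fin k, sSign x y * mdot (r x) (h y) (t (wIdx x y))

/-- All-segments scoring function f₂. -/
def f2 {k m : ℕ} (h r t : Fin k → Fin m → ℝ) : ℝ :=
  ∑ x : Fin k, ∑ y : Fin k, ∑ w : Fin k, mdot (r x) (h y) (t w)

/-- Signed scoring function f₃. -/
def f3 {k m : ℕ} (h r t : Fin k → Fin m → ℝ) : ℝ :=
  ∑ x : Fin k, ∑ y : Fin k, ∑ w : Fin k, sSign x y * mdot (r x) (h y) (t w)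

/-- SEEK with k = 2 coincides with the ComplEx scoring function whose real and
imaginary parts are the even and odd segments respectively. -/
theorem seek_k2_eq_complex (m : ℕ) (hm : 1 ≤ m) (h r t : Fin 2 → Fin m → ℝ) :
    f4 h r t =
      (∑ i : Fin m,
        ((r 0 i : ℂ) + (r 1 i : ℂ) * Complex.I) *
          ((h 0 i : ℂ) + (h 1 i : ℂ) * Complex.I) *
          (starRingEnd ℂ) ((t 0 i : ℂ) + (t 1 i : ℂ) * Complex.I)).re := by
  simp only [f4, mdot, sSign, wIdx, Fin.sum_univ_two, Complex.re_sum, Fin.val_zero,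
    Fin.val_one, Fin.isValue]
  norm_num [Fin.ext_iff, Finset.mul_sum, ← Finset.sum_add_distrib, ← Finset.sum_sub_distrib,
    ← Finset.sum_neg_distrib]
  apply Finset.sum_congr rfl
  intro i _
  ring_nf
end

section
/- For all integers k ≥ 1 and m ≥ 1 and all segmented embeddings h, r, t, the all-segments scoring function f₂ is symmetric in the head and tail entities: f₂(h, r, t) = f₂(t, r, h). -/
open Finset

/-- f₂ is symmetric in the head and tail entities. -/
theorem f2_symm (k m : ℕ) (hk : 1 ≤ k) (hm : 1 ≤ m) (h r t : Fin k → Fin m → ℝ) :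
    f2 h r t = f2 t r h := by
  unfold f2 mdot
  apply Finset.sum_congr rfl
  intro x _
  rw [Finset.sum_comm]
  apply Finset.sum_congr rfl; intro y _
  apply Finset.sum_congr rfl; intro w _
  apply Finset.sum_congr rfl; intro i _
  ring
end

section
/- Let k ≥ 1 and m ≥ 1, and let h, r, t be segmented embeddings. If every odd-indexed segment of r vanishes (r_x = 0 for all odd x), then the signed scoring function f₃ is symmetric in the head and tail: f₃(h, r, t) = f₃(t, r, h). -/
open Finset

/-- If every odd-indexed segment of r vanishes, then f₃ is symmetric in head and tail. -/
theorem f3_symm_of_odd_zero (k m : ℕ) (hk : 1 ≤ k) (hm : 1 ≤ m)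
    (h r t : Fin k → Fin m → ℝ) (hr : ∀ x : Fin k, x.val % 2 = 1 → r x = 0) :
    f3 h r t = f3 t r h := by
  unfold f3
  apply Finset.sum_congr rfl
  intro x _
  rcases Nat.even_or_odd x.val with he | ho
  · have hs : ∀ y : Fin k, sSign x y = 1 := by
      intro y
      unfold sSign
      rw [if_neg]
      rintro ⟨h1, _⟩
      have := Nat.even_iff.mp he
      omega
    simp only [hs, one_mul]
    rw [Finset.sum_comm]
    apply Finset.sum_congr rfl; intro y _
    apply Finset.sum_congr rfl; intro w _
    unfold mdot
    apply Finset.sum_congr rfl; intro i _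
    ring
  · have hz : r x = 0 := hr x (Nat.odd_iff.mp ho)
    have : ∀ (a b : Fin k → Fin m → ℝ), ∀ y w : Fin k,
        sSign x y * mdot (r x) (a y) (b w) = 0 := by
      intro a b y w
      simp [hz, mdot]
    simp [this]
end

section
/- Let k ≥ 1 and m ≥ 1, and let h, r, t be segmented embeddings. If every odd-indexed segment of r vanishes (r_x = 0 for all odd x), then the SEEK scoring function is symmetric in the head and tail: f₄(h, r, t) = f₄(t, r, h). In particular, the even segments of the relation embedding preserve the symmetry property of relations. -/
open Finset

/-- If every odd-indexed segment of r vanishes, then f₄ is symmetric in head and tail: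
the even segments of the relation embedding preserve the symmetry property. -/
theorem f4_symm_of_odd_zero (k m : ℕ) (hk : 1 ≤ k) (hm : 1 ≤ m)
    (h r t : Fin k → Fin m → ℝ) (hr : ∀ x : Fin k, x.val % 2 = 1 → r x = 0) :
    f4 h r t = f4 t r h := by
  unfold f4
  apply Finset.sum_congr rfl
  intro x _
  apply Finset.sum_congr rfl
  intro y _
  rcases Nat.even_or_odd x.val with he | ho
  · have h2 : x.val % 2 = 0 := Nat.even_iff.mp he
    have hs : sSign x y = 1 := by
      unfold sSign
      rw [if_neg]
      rintro ⟨h1, _⟩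
      omega
    have hw : wIdx x y = y := by unfold wIdx; rw [if_pos h2]
    rw [hs, hw]
    unfold mdot
    rw [one_mul, one_mul]
    exact Finset.sum_congr rfl fun i _ => by ring
  · have h2 : x.val % 2 = 1 := Nat.odd_iff.mp ho
    rw [hr x h2]
    unfold mdot
    simp
end

section
/- Let k = 2 and m ≥ 1, and let h, r, t be segmented embeddings. If the even segment of r vanishes (r₀ = 0), then the SEEK scoring function is antisymmetric in the head and tail: f₄(h, r, t) = −f₄(t, r, h). In particular, the odd segment of the relation embedding preserves the antisymmetry property of relations when k = 2. -/
open Finset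

/-- For k = 2, if the even segment of r vanishes, then f₄ is antisymmetric in head and tail. -/
theorem f4_antisymm_k2_of_even_zero (m : ℕ) (hm : 1 ≤ m)
    (h r t : Fin 2 → Fin m → ℝ) (hr : r 0 = 0) :
    f4 h r t = -f4 t r h := by
  simp [f4, Fin.sum_univ_two, sSign, wIdx, hr, mdot, ← Finset.sum_neg_distrib]
  congr 1 <;> exact Finset.sum_congr rfl fun i _ => by ring
end

section
/- For every integer k ≥ 2 and every m ≥ 1, the SEEK scoring function can distinguish a triple from its reverse: there exist segmented embeddings h, r, t (with k segments of dimension m each) such that f₄(h, r, t) ≠ f₄(t, r, h). Hence f₄ supports the modeling of antisymmetric relations. -/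
open Finset

lemma mdot_zero_left {m : ℕ} (b c : Fin m → ℝ) : mdot (fun _ => (0:ℝ)) b c = 0 := by
  simp [mdot]

lemma mdot_zero_mid {m : ℕ} (b c : Fin m → ℝ) : mdot b (fun _ => (0:ℝ)) c = 0 := by
  simp [mdot]

lemma mdot_zero_right {m : ℕ} (b c : Fin m → ℝ) : mdot b c (fun _ => (0:ℝ)) = 0 := by
  simp [mdot]

/-- basis-like vector -/
def eVec (m : ℕ) : Fin m → ℝ := fun i => if i.val = 0 then 1 else 0

lemma mdot_eVec {m : ℕ} (hm : 1 ≤ m) : mdot (eVec m) (eVec m) (eVec m) = 1 := by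
  have key : ∀ i : Fin m, eVec m i * eVec m i * eVec m i =
      if i = (⟨0, hm⟩ : Fin m) then 1 else 0 := by
    intro i
    by_cases hi : i.val = 0
    · have : i = (⟨0, hm⟩ : Fin m) := Fin.ext hi
      simp [eVec, hi, this]
    · have : i ≠ (⟨0, hm⟩ : Fin m) := by
        intro hcon; exact hi (by rw [hcon])
      simp [eVec, hi, this]
  rw [mdot]
  rw [Finset.sum_congr rfl (fun i _ => key i)]
  simp

def hF (k m : ℕ) : Fin k → Fin m → ℝ := fun y => if y.val = k - 1 then eVec m else fun _ => 0
def rF (k m : ℕ) : Fin k → Fin m → ℝ := fun x => if x.val = 1 then eVec m else fun _ => 0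
def tF (k m : ℕ) : Fin k → Fin m → ℝ := fun w => if w.val = 0 then eVec m else fun _ => 0

lemma f4_val1 (k m : ℕ) (hk : 2 ≤ k) (hm : 1 ≤ m) :
    f4 (hF k m) (rF k m) (tF k m) = -1 := by
  have hx1 : (1 : ℕ) < k := by omega
  have hyk : k - 1 < k := by omega
  rw [f4, Finset.sum_eq_single (⟨1, hx1⟩ : Fin k)]
  · rw [Finset.sum_eq_single (⟨k - 1, hyk⟩ : Fin k)]
    · have hrx : rF k m ⟨1, hx1⟩ = eVec m := by simp [rF]
      have hhy : hF k m ⟨k - 1, hyk⟩ = eVec m := by simp [hF]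
      have hw : wIdx (⟨1, hx1⟩ : Fin k) ⟨k - 1, hyk⟩ = ⟨0, by omega⟩ := by
        rw [wIdx]
        norm_num
        rw [show 1 + (k - 1) = k by omega, Nat.mod_self]
      have hs : sSign (⟨1, hx1⟩ : Fin k) ⟨k - 1, hyk⟩ = -1 := by
        rw [sSign, if_pos]
        exact ⟨rfl, by simp; omega⟩
      rw [hrx, hhy, hw, hs]
      have : tF k m ⟨0, by omega⟩ = eVec m := by simp [tF]
      rw [this, mdot_eVec hm]
      norm_num
    · intro y _ hy
      have hy' : y.val ≠ k - 1 := fun hc => hy (Fin.ext hc)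
      have : hF k m y = fun _ => 0 := by simp [hF, hy']
      rw [this, mdot_zero_mid, mul_zero]
    · intro hmem; exact absurd (Finset.mem_univ _) hmem
  · intro x _ hx
    have hx' : x.val ≠ 1 := fun hc => hx (Fin.ext hc)
    have : rF k m x = fun _ => 0 := by simp [rF, hx']
    rw [this]
    apply Finset.sum_eq_zero
    intro y _
    rw [mdot_zero_left, mul_zero]
  · intro hmem; exact absurd (Finset.mem_univ _) hmem

lemma f4_val2 (k m : ℕ) (hk : 2 ≤ k) (hm : 1 ≤ m) :
    f4 (tF k m) (rF k m) (hF k m) = if k = 2 then 1 else 0 := by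
  have hx1 : (1 : ℕ) < k := by omega
  have h0 : (0 : ℕ) < k := by omega
  rw [f4, Finset.sum_eq_single (⟨1, hx1⟩ : Fin k)]
  · rw [Finset.sum_eq_single (⟨0, h0⟩ : Fin k)]
    · have hrx : rF k m ⟨1, hx1⟩ = eVec m := by simp [rF]
      have hty : tF k m ⟨0, h0⟩ = eVec m := by simp [tF]
      have hw : wIdx (⟨1, hx1⟩ : Fin k) ⟨0, h0⟩ = ⟨1, hx1⟩ := by
        rw [wIdx]
        norm_num
        exact Nat.mod_eq_of_lt hx1
      have hs : sSign (⟨1, hx1⟩ : Fin k) ⟨0, h0⟩ = 1 := by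
        rw [sSign, if_neg]
        rintro ⟨-, h2⟩
        simp at h2
        omega
      rw [hrx, hty, hw, hs, one_mul]
      by_cases hc : k = 2
      · have : hF k m ⟨1, hx1⟩ = eVec m := by
          simp [hF]; omega
        rw [this, mdot_eVec hm, if_pos hc]
      · have : hF k m ⟨1, hx1⟩ = fun _ => 0 := by
          have : (1 : ℕ) ≠ k - 1 := by omega
          simp [hF, this]
        rw [this, mdot_zero_right, if_neg hc]
    · intro y _ hy
      have hy' : y.val ≠ 0 := fun hc => hy (Fin.ext hc)
      have : tF k m y = fun _ => 0 := by simp [tF, hy']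
      rw [this, mdot_zero_mid, mul_zero]
    · intro hmem; exact absurd (Finset.mem_univ _) hmem
  · intro x _ hx
    have hx' : x.val ≠ 1 := fun hc => hx (Fin.ext hc)
    have : rF k m x = fun _ => 0 := by simp [rF, hx']
    rw [this]
    apply Finset.sum_eq_zero
    intro y _
    rw [mdot_zero_left, mul_zero]
  · intro hmem; exact absurd (Finset.mem_univ _) hmem

/-- For every k ≥ 2, f₄ can distinguish a triple from its reverse. -/
theorem f4_supports_antisymmetry (k m : ℕ) (hk : 2 ≤ k) (hm : 1 ≤ m) :
    ∃ h r t : Fin k → Fin m → ℝ, f4 h r t ≠ f4 t r h := by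
  refine ⟨hF k m, rF k m, tF k m, ?_⟩
  rw [f4_val1 k m hk hm, f4_val2 k m hk hm]
  by_cases hc : k = 2 <;> simp [hc] <;> norm_num
end

section
/- For every integer k ≥ 2 and every m ≥ 1, the signed scoring function f₃ can distinguish a triple from its reverse: there exist segmented embeddings h, r, t (with k segments of dimension m each) such that f₃(h, r, t) ≠ f₃(t, r, h). Hence f₃ supports the modeling of antisymmetric relations, unlike f₂. -/
open Finset

lemma f3_delta {k m : ℕ} (hk : 2 ≤ k) (a b c : Fin k) :
    f3 (fun (y : Fin k) (_ : Fin m) => if y = a then (1:ℝ) else 0)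
       (fun (x : Fin k) (_ : Fin m) => if x = b then (1:ℝ) else 0)
       (fun (w : Fin k) (_ : Fin m) => if w = c then (1:ℝ) else 0)
      = sSign b a * m := by
  unfold f3 mdot
  have key : ∀ x y w : Fin k,
      (∑ i : Fin m, (if x = b then (1:ℝ) else 0) * (if y = a then (1:ℝ) else 0)
        * (if w = c then (1:ℝ) else 0))
      = if x = b then (if y = a then (if w = c then (m:ℝ) else 0) else 0) else 0 := by
    intro x y w
    by_cases hx : x = b <;> by_cases hy : y = a <;> by_cases hw : w = c <;>
      simp [hx, hy, hw]
  simp only [key]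
  simp only [mul_ite, mul_zero]
  rw [Finset.sum_eq_single b]
  · rw [Finset.sum_eq_single a]
    · rw [Finset.sum_eq_single c]
      · simp
      · intro w _ hw; simp [hw]
      · simp
    · intro y _ hy; simp [hy]
    · simp
  · intro x _ hx; simp [hx]
  · simp

/-- For every k ≥ 2, f₃ can distinguish a triple from its reverse. -/
theorem f3_supports_antisymmetry (k m : ℕ) (hk : 2 ≤ k) (hm : 1 ≤ m) :
    ∃ h r t : Fin k → Fin m → ℝ, f3 h r t ≠ f3 t r h := by
  have hkpos : 0 < k := by omega
  set a : Fin k := ⟨0, hkpos⟩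
  set b : Fin k := ⟨1, by omega⟩
  set c : Fin k := ⟨k - 1, by omega⟩
  refine ⟨fun y _ => if y = a then (1:ℝ) else 0,
          fun x _ => if x = b then (1:ℝ) else 0,
          fun w _ => if w = c then (1:ℝ) else 0, ?_⟩
  rw [f3_delta hk a b c, f3_delta hk c b a]
  have h1 : sSign b a = 1 := by
    unfold sSign; simp [a, b]; omega
  have h2 : sSign b c = -1 := by
    unfold sSign
    rw [if_pos]
    simp [b, c]; omega
  rw [h1, h2]
  have : (1:ℝ) ≤ m := by exact_mod_cast hm
  nlinarith
end

section
/- Let m ≥ 1 and let R, H, T ∈ ℂ^m with every entry of R purely imaginary (Re(R_i) = 0 for all i). Then the ComplEx score is antisymmetric in the head and tail: Re(∑_{i<m} R_i H_i conj(T_i)) = −Re(∑_{i<m} R_i T_i conj(H_i)). Hence a relation embedding with zero real part models antisymmetric relations. -/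
open Finset

/-- A ComplEx relation embedding with zero real part models antisymmetric relations. -/
theorem complex_antisymm_of_imaginary (m : ℕ) (hm : 1 ≤ m) (R H T : Fin m → ℂ)
    (hR : ∀ i, (R i).re = 0) :
    (∑ i : Fin m, R i * H i * (starRingEnd ℂ) (T i)).re =
      -(∑ i : Fin m, R i * T i * (starRingEnd ℂ) (H i)).re := by
  rw [Complex.re_sum, Complex.re_sum, ← Finset.sum_neg_distrib]
  apply Finset.sum_congr rfl
  intro i _
  simp [Complex.mul_re, Complex.mul_im, hR i]
  ring
end
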